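/- Let (Ω,μ) be a finite measure space, X a Banach space, and 1 ≤ p < ∞. If a subset V of L^p(μ;X) is uniformly L^p-integrable, uniformly tight, and scalarly relatively compact, then V is relatively compact in L^p(μ;X). -/

import Mathlib

set_option maxHeartbeats 1000000
set_option synthInstance.maxHeartbeats 400000

open MeasureTheory ENNReal Filter Set Topology


section Aux

variable {X : Type*} [NormedAddCommGroup X] [NormedSpace ℝ X]

/-- On a compact set, a separating family of functionals is "uniformly separating":
finitely many of them determine the norm up to `δ`. -/
lemma aux_compact_sep {ι : Type*} (L : ι → (X →L[ℝ] ℝ)) {K : Set X} (hK : IsCompact K)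
    (hsep : ∀ x ∈ K, ∀ y ∈ K, x ≠ y → ∃ i, L i x ≠ L i y)
    {δ : ℝ} (hδ : 0 < δ) :
    ∃ (F : Finset ι) (θ : ℝ), 0 < θ ∧ ∀ x ∈ K, ∀ y ∈ K,
      (∀ i ∈ F, |L i x - L i y| ≤ θ) → dist x y ≤ δ := by
  classical
  set C : Set (X × X) := (K ×ˢ K) ∩ {z | δ ≤ dist z.1 z.2} with hC
  have hCcomp : IsCompact C :=
    (hK.prod hK).inter_right (isClosed_le continuous_const (by fun_prop))
  set U : ι × ℕ → Set (X × X) :=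
    fun iq => {z | 1 / (iq.2 + 1 : ℝ) < |L iq.1 z.1 - L iq.1 z.2|} with hU
  have hUopen : ∀ iq, IsOpen (U iq) := by
    intro iq
    have hcont : Continuous fun z : X × X => |L iq.1 z.1 - L iq.1 z.2| := by fun_prop
    exact isOpen_lt continuous_const hcont
  have hcover : C ⊆ ⋃ iq, U iq := by
    rintro ⟨x, y⟩ ⟨⟨hx, hy⟩, hdist⟩
    have hdist' : δ ≤ dist x y := hdist
    have hxy : x ≠ y := by
      intro h
      rw [h, dist_self] at hdist'
      linarith
    obtain ⟨i, hi⟩ := hsep x hx y hy hxy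
    have habs : 0 < |L i x - L i y| := abs_pos.mpr (sub_ne_zero.mpr hi)
    obtain ⟨q, hq⟩ := exists_nat_one_div_lt habs
    exact Set.mem_iUnion.mpr ⟨(i, q), hq⟩
  obtain ⟨T, hT⟩ := hCcomp.elim_finite_subcover U hUopen hcover
  by_cases hTne : T.Nonempty
  · refine ⟨T.image Prod.fst, T.inf' hTne (fun iq => 1 / (iq.2 + 1 : ℝ)), ?_, ?_⟩
    · rw [Finset.lt_inf'_iff]
      intro iq _
      positivity
    · intro x hx y hy hb
      by_contra hcon
      have hmem : (x, y) ∈ C := ⟨⟨hx, hy⟩, le_of_lt (not_le.mp hcon)⟩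
      have := hT hmem
      simp only [Set.mem_iUnion, exists_prop] at this
      obtain ⟨iq, hiqT, hiq⟩ := this
      have h1 : 1 / (iq.2 + 1 : ℝ) < |L iq.1 x - L iq.1 y| := hiq
      have h2 : |L iq.1 x - L iq.1 y| ≤ T.inf' hTne (fun iq => 1 / (iq.2 + 1 : ℝ)) :=
        hb iq.1 (Finset.mem_image_of_mem _ hiqT)
      have h3 : T.inf' hTne (fun iq => 1 / (iq.2 + 1 : ℝ)) ≤ 1 / (iq.2 + 1 : ℝ) :=
        Finset.inf'_le _ hiqT
      linarith
  · refine ⟨∅, 1, one_pos, ?_⟩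
    intro x hx y hy _
    by_contra hcon
    have hmem : (x, y) ∈ C := ⟨⟨hx, hy⟩, le_of_lt (not_le.mp hcon)⟩
    rw [Finset.not_nonempty_iff_eq_empty] at hTne
    subst hTne
    simpa using hT hmem

/-- A sequence of compact sets admits a countable family of norm-one functionals
separating points of each of them. -/
lemma aux_exists_sep_family [CompleteSpace X] (K : ℕ → Set X) (hK : ∀ j, IsCompact (K j)) :
    ∃ S : Set (X × X), S.Countable ∧ ∃ L : S → (X →L[ℝ] ℝ),
      ∀ j, ∀ x ∈ K j, ∀ y ∈ K j, x ≠ y → ∃ i, L i x ≠ L i y := by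
  choose D hDc hDK using fun j => (hK j).isSeparable
  set D0 : Set X := ⋃ j, D j with hD0
  have hD0c : D0.Countable := Set.countable_iUnion hDc
  set S : Set (X × X) := {z : X × X | z.1 ∈ D0 ∧ z.2 ∈ D0 ∧ z.1 ≠ z.2} with hS
  have hScount : S.Countable := by
    have : S ⊆ D0 ×ˢ D0 := fun z hz => ⟨hz.1, hz.2.1⟩
    exact (hD0c.prod hD0c).mono this
  have hne : ∀ i : S, (i : X × X).1 - (i : X × X).2 ≠ 0 := fun i =>
    sub_ne_zero.mpr i.2.2.2
  refine ⟨S, hScount, fun i => (exists_dual_vector ℝ _ (norm_ne_zero_iff.mpr (hne i))).choose, ?_⟩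
  intro j x hx y hy hxy
  set c : ℝ := ‖x - y‖ with hc
  have hcpos : 0 < c := norm_sub_pos_iff.mpr hxy
  have hxD : x ∈ closure (D j) := hDK j hx
  have hyD : y ∈ closure (D j) := hDK j hy
  obtain ⟨d, hdD, hdx⟩ := Metric.mem_closure_iff.mp hxD (c / 8) (by positivity)
  obtain ⟨d', hd'D, hd'y⟩ := Metric.mem_closure_iff.mp hyD (c / 8) (by positivity)
  have hdx' : ‖x - d‖ < c / 8 := by rwa [← dist_eq_norm]
  have hd'y' : ‖y - d'‖ < c / 8 := by rwa [← dist_eq_norm]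
  have hdd' : (3 : ℝ) / 4 * c ≤ ‖d - d'‖ := by
    have heq : x - y = (x - d) + (d - d') + (d' - y) := by abel
    have h1 : ‖x - y‖ ≤ ‖x - d‖ + ‖d - d'‖ + ‖d' - y‖ := by
      rw [heq]
      exact (norm_add_le _ _).trans (by gcongr; exact norm_add_le _ _)
    have h2 : ‖d' - y‖ = ‖y - d'‖ := norm_sub_rev _ _
    have hcle : c ≤ ‖x - d‖ + ‖d - d'‖ + ‖d' - y‖ := h1
    linarith
  have hd_ne : d ≠ d' := by
    intro h
    subst h
    rw [sub_self, norm_zero] at hdd'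
    linarith
  have hdmem : d ∈ D0 := Set.mem_iUnion.mpr ⟨j, hdD⟩
  have hd'mem : d' ∈ D0 := Set.mem_iUnion.mpr ⟨j, hd'D⟩
  set i : S := ⟨(d, d'), hdmem, hd'mem, hd_ne⟩ with hi
  have hspec := (exists_dual_vector ℝ ((i : X × X).1 - (i : X × X).2) (norm_ne_zero_iff.mpr (hne i))).choose_spec
  set L0 : X →L[ℝ] ℝ := (exists_dual_vector ℝ ((i : X × X).1 - (i : X × X).2) (norm_ne_zero_iff.mpr (hne i))).choose
    with hL0
  have hnorm : ‖L0‖ = 1 := hspec.1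
  have hval : L0 (d - d') = ‖d - d'‖ := hspec.2
  refine ⟨i, ?_⟩
  have hbound : ‖L0 ((x - y) - (d - d'))‖ ≤ ‖(x - y) - (d - d')‖ := by
    calc ‖L0 ((x - y) - (d - d'))‖ ≤ ‖L0‖ * ‖(x - y) - (d - d')‖ := L0.le_opNorm _
      _ = ‖(x - y) - (d - d')‖ := by rw [hnorm, one_mul]
  have hdiff : ‖(x - y) - (d - d')‖ ≤ c / 4 := by
    have : (x - y) - (d - d') = (x - d) - (y - d') := by abel
    rw [this]
    calc ‖(x - d) - (y - d')‖ ≤ ‖x - d‖ + ‖y - d'‖ := norm_sub_le _ _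
      _ ≤ c / 4 := by linarith
  have hL0xy : L0 (x - y) = L0 (d - d') + L0 ((x - y) - (d - d')) := by
    rw [← map_add]
    congr 1
    abel
  have hLlow : c / 2 ≤ L0 (x - y) := by
    have habs : |L0 ((x - y) - (d - d'))| ≤ c / 4 := by
      rw [← Real.norm_eq_abs]
      exact hbound.trans hdiff
    have := abs_le.mp habs
    rw [hL0xy, hval]
    linarith
  intro h
  have : L0 (x - y) = 0 := by rw [map_sub, h, sub_self]
  rw [this] at hLlow
  linarith

end Aux

theorem relatively_compact_of_integrable_tight_scalarlyCompact
    {Ω : Type*} [MeasurableSpace Ω] {X : Type*} [NormedAddCommGroup X]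
    [NormedSpace ℝ X] [CompleteSpace X]
    (μ : Measure Ω) [IsFiniteMeasure μ] (p : ℝ≥0∞) [hp : Fact (1 ≤ p)] (hp' : p ≠ ∞)
    (V : Set (Lp X p μ))
    (hint : Tendsto (fun r : ℝ =>
        ⨆ f ∈ V, eLpNorm (Set.indicator {ω | r < ‖(f : Ω → X) ω‖} (f : Ω → X)) p μ)
      atTop (nhds 0))
    (htight : ∀ ε : ℝ, 0 < ε → ∃ K : Set X, IsCompact K ∧
        ∀ f ∈ V, μ {ω | (f : Ω → X) ω ∉ K} ≤ ENNReal.ofReal ε)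
    (hscalar : ∀ L : X →L[ℝ] ℝ, IsCompact (closure ((fun f => L.compLp f) '' V))) :
    IsCompact (closure V) := by
  classical
  have hp1 : (1 : ℝ≥0∞) ≤ p := hp.out
  have hp0 : p ≠ 0 := fun h => by simp [h] at hp1
  have hpt : 0 < p.toReal := ENNReal.toReal_pos hp0 hp'
  -- uniform integrability in a convenient form
  have hUI : ∀ η : ℝ, 0 < η → ∃ r : ℝ, 1 ≤ r ∧ ∀ f ∈ V,
      eLpNorm (Set.indicator {ω | r < ‖(f : Ω → X) ω‖} (f : Ω → X)) p μ
        ≤ ENNReal.ofReal η := by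
    intro η hη
    have h0 : (0 : ℝ≥0∞) < ENNReal.ofReal η := ENNReal.ofReal_pos.mpr hη
    have hev := (hint.eventually_lt_const h0).and (eventually_ge_atTop (1 : ℝ))
    obtain ⟨r, hr, hr1⟩ := hev.exists
    refine ⟨r, hr1, fun f hf => le_trans ?_ hr.le⟩
    exact le_iSup₂ (f := fun (g : Lp X p μ) (_ : g ∈ V) =>
      eLpNorm (Set.indicator {ω | r < ‖(g : Ω → X) ω‖} (g : Ω → X)) p μ) f hf
  -- the key step: every sequence in V has an Lp-Cauchy subsequence
  have key : ∀ u : ℕ → Lp X p μ, (∀ n, u n ∈ V) →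
      ∃ φ : ℕ → ℕ, StrictMono φ ∧ CauchySeq (u ∘ φ) := by
    intro u hu
    choose K hKcomp hKmeas using fun j : ℕ => htight (1 / (j + 1)) (by positivity)
    obtain ⟨S, hScount, L, hLsep⟩ := aux_exists_sep_family K hKcomp
    haveI : Countable S := hScount.to_subtype
    have hqS : ∀ n, (fun i : S => (L i).compLp (u n)) ∈
        Set.pi Set.univ (fun i : S => closure ((fun f => (L i).compLp f) '' V)) := by
      intro n i _
      exact subset_closure ⟨u n, hu n, rfl⟩
    obtain ⟨a, -, φ, hφ, hconv⟩ :=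
      (isCompact_univ_pi fun i : S => hscalar (L i)).tendsto_subseq hqS
    have hconv_i : ∀ i : S,
        Tendsto (fun n => (L i).compLp (u (φ n))) atTop (𝓝 (a i)) :=
      fun i => ((continuous_apply i).tendsto a).comp hconv
    have hmeasconv : ∀ i : S, TendstoInMeasure μ
        (fun n => ((L i).compLp (u (φ n)) : Ω → ℝ)) atTop (a i) :=
      fun i => tendstoInMeasure_of_tendsto_Lp (hconv_i i)
    -- Cauchy in measure for the subsequence
    have hCM : ∀ δ : ℝ, 0 < δ → ∀ ε : ℝ, 0 < ε → ∃ N : ℕ, ∀ n, N ≤ n → ∀ m, N ≤ m →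
        μ {ω | δ < ‖(u (φ n) : Ω → X) ω - (u (φ m) : Ω → X) ω‖} ≤ ENNReal.ofReal ε := by
      intro δ hδ ε hε
      obtain ⟨j, hj⟩ := exists_nat_one_div_lt (show (0:ℝ) < ε/4 by positivity)
      obtain ⟨F, θ, hθ, hFsep⟩ := aux_compact_sep L (hKcomp j) (hLsep j) hδ
      set c : ℝ := ε / (8 * (F.card + 1)) with hc
      have hcpos : 0 < c := by positivity
      have hNex : ∀ i : S, ∃ N : ℕ, ∀ n, N ≤ n →
          μ {ω | θ/2 ≤ dist (((L i).compLp (u (φ n)) : Ω → ℝ) ω) (a i ω)}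
            ≤ ENNReal.ofReal c := by
        intro i
        have hev := (hmeasconv i (ENNReal.ofReal (θ/2))
          (ENNReal.ofReal_pos.mpr (by positivity))).eventually_lt_const
          (ENNReal.ofReal_pos.mpr hcpos)
        obtain ⟨N, hN⟩ := eventually_atTop.mp hev
        refine ⟨N, fun n hn => le_trans (le_of_eq ?_) (hN n hn).le⟩
        congr 1
        ext ω
        simp only [Set.mem_setOf_eq, edist_dist]
        rw [ENNReal.ofReal_le_ofReal_iff dist_nonneg]
      choose Ni hNi using hNex
      refine ⟨F.sup Ni, fun n hn m hm => ?_⟩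
      have haeF : ∀ᵐ ω ∂μ, ∀ i ∈ F,
          (((L i).compLp (u (φ n)) : Ω → ℝ) ω = L i ((u (φ n) : Ω → X) ω) ∧
            ((L i).compLp (u (φ m)) : Ω → ℝ) ω = L i ((u (φ m) : Ω → X) ω)) := by
        rw [eventually_all_finset]
        intro i _
        exact ((L i).coeFn_compLp (u (φ n))).and ((L i).coeFn_compLp (u (φ m)))
      set A : Set Ω := {ω | (u (φ n) : Ω → X) ω ∉ K j} with hA
      set B : Set Ω := {ω | (u (φ m) : Ω → X) ω ∉ K j} with hB
      set W : S → ℕ → Set Ω := fun i k =>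
        {ω | θ/2 ≤ dist (((L i).compLp (u (φ k)) : Ω → ℝ) ω) (a i ω)} with hW
      have hsub : ({ω | δ < ‖(u (φ n) : Ω → X) ω - (u (φ m) : Ω → X) ω‖} : Set Ω) ≤ᵐ[μ]
          ((A ∪ B ∪ ⋃ i ∈ F, (W i n ∪ W i m) : Set Ω)) := by
        filter_upwards [haeF] with ω hω hmem
        by_cases h1 : (u (φ n) : Ω → X) ω ∈ K j
        · by_cases h2 : (u (φ m) : Ω → X) ω ∈ K j
          · have hd : ¬ dist ((u (φ n) : Ω → X) ω) ((u (φ m) : Ω → X) ω) ≤ δ := by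
              rw [dist_eq_norm]
              exact not_le.mpr hmem
            have hnotall : ¬ ∀ i ∈ F,
                |L i ((u (φ n) : Ω → X) ω) - L i ((u (φ m) : Ω → X) ω)| ≤ θ := by
              intro hcon
              exact hd (hFsep _ h1 _ h2 hcon)
            push_neg at hnotall
            obtain ⟨i, hiF, hgt⟩ := hnotall
            have hvals := hω i hiF
            have hWi : ω ∈ W i n ∪ W i m := by
              by_contra hcon
              rw [Set.mem_union] at hcon
              push_neg at hcon
              have hc1 : dist (((L i).compLp (u (φ n)) : Ω → ℝ) ω) (a i ω) < θ/2 := by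
                have := hcon.1
                simp only [hW, Set.mem_setOf_eq, not_le] at this
                exact this
              have hc2 : dist (((L i).compLp (u (φ m)) : Ω → ℝ) ω) (a i ω) < θ/2 := by
                have := hcon.2
                simp only [hW, Set.mem_setOf_eq, not_le] at this
                exact this
              rw [Real.dist_eq] at hc1 hc2
              have htri : |L i ((u (φ n) : Ω → X) ω) - L i ((u (φ m) : Ω → X) ω)| ≤
                  |((L i).compLp (u (φ n)) : Ω → ℝ) ω - a i ω| +
                    |((L i).compLp (u (φ m)) : Ω → ℝ) ω - a i ω| := by
                rw [← hvals.1, ← hvals.2]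
                calc |((L i).compLp (u (φ n)) : Ω → ℝ) ω - ((L i).compLp (u (φ m)) : Ω → ℝ) ω|
                    ≤ |((L i).compLp (u (φ n)) : Ω → ℝ) ω - a i ω| +
                      |a i ω - ((L i).compLp (u (φ m)) : Ω → ℝ) ω| := abs_sub_le _ _ _
                  _ = |((L i).compLp (u (φ n)) : Ω → ℝ) ω - a i ω| +
                      |((L i).compLp (u (φ m)) : Ω → ℝ) ω - a i ω| := by
                      rw [abs_sub_comm (a i ω)]
              linarith
            exact Set.mem_union_right _ (Set.mem_biUnion hiF hWi : ω ∈ ⋃ i ∈ F, (W i n ∪ W i m))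
          · exact Set.mem_union_left _ (Set.mem_union_right _ h2)
        · exact Set.mem_union_left _ (Set.mem_union_left _ h1)
      have hμA : μ A ≤ ENNReal.ofReal (ε/4) :=
        (hKmeas j _ (hu (φ n))).trans (ENNReal.ofReal_le_ofReal hj.le)
      have hμB : μ B ≤ ENNReal.ofReal (ε/4) :=
        (hKmeas j _ (hu (φ m))).trans (ENNReal.ofReal_le_ofReal hj.le)
      have hμW : ∀ i ∈ F, μ (W i n ∪ W i m) ≤ ENNReal.ofReal c + ENNReal.ofReal c := by
        intro i hiF
        refine (measure_union_le _ _).trans (add_le_add ?_ ?_)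
        · exact hNi i n (le_trans (Finset.le_sup hiF) hn)
        · exact hNi i m (le_trans (Finset.le_sup hiF) hm)
      have hcd : (0:ℝ) ≤ (F.card : ℝ) := Nat.cast_nonneg _
      have hmulc : c * (8 * ((F.card : ℝ) + 1)) = ε := by
        rw [hc]
        field_simp
      calc μ {ω | δ < ‖(u (φ n) : Ω → X) ω - (u (φ m) : Ω → X) ω‖}
          ≤ μ (A ∪ B ∪ ⋃ i ∈ F, (W i n ∪ W i m)) := measure_mono_ae hsub
        _ ≤ μ (A ∪ B) + μ (⋃ i ∈ F, (W i n ∪ W i m)) := measure_union_le _ _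
        _ ≤ (μ A + μ B) + ∑ i ∈ F, μ (W i n ∪ W i m) := by
            gcongr
            · exact measure_union_le _ _
            · exact measure_biUnion_finset_le _ _
        _ ≤ (ENNReal.ofReal (ε/4) + ENNReal.ofReal (ε/4)) +
              ∑ _i ∈ F, (ENNReal.ofReal c + ENNReal.ofReal c) :=
            add_le_add (add_le_add hμA hμB) (Finset.sum_le_sum hμW)
        _ = ENNReal.ofReal (ε/4 + ε/4 + (F.card : ℝ) * (c + c)) := by
            rw [Finset.sum_const, nsmul_eq_mul]
            rw [ENNReal.ofReal_add (p := ε/4 + ε/4) (by positivity) (by positivity),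
              ENNReal.ofReal_add (p := ε/4) (q := ε/4) (by positivity) (by positivity),
              ENNReal.ofReal_mul hcd,
              ENNReal.ofReal_add (p := c) (q := c) (by positivity) (by positivity),
              ENNReal.ofReal_natCast]
        _ ≤ ENNReal.ofReal ε := by
            apply ENNReal.ofReal_le_ofReal
            nlinarith [hcpos, hcd]
    -- conclude Cauchy in Lp
    refine ⟨φ, hφ, ?_⟩
    rw [Metric.cauchySeq_iff]
    intro ε hε
    obtain ⟨r, hr1, hr⟩ := hUI (ε/12) (by positivity)
    have hrpos : (0:ℝ) < r := lt_of_lt_of_le one_pos hr1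
    set Ma : ℝ := (μ Set.univ).toReal ^ p.toReal⁻¹ with hMa
    have hMa0 : 0 ≤ Ma := by positivity
    set δ : ℝ := (ε/12) / (Ma + 1) with hδdef
    have hδ : 0 < δ := by positivity
    set εD : ℝ := ((ε/12)/r) ^ p.toReal with hεD
    have hεD0 : 0 < εD := by positivity
    obtain ⟨N, hN⟩ := hCM δ hδ εD hεD0
    refine ⟨N, fun n hn m hm => ?_⟩
    have hsmn := Lp.stronglyMeasurable (u (φ n))
    have hsmm := Lp.stronglyMeasurable (u (φ m))
    set D : Set Ω := {ω | δ < ‖(u (φ n) : Ω → X) ω - (u (φ m) : Ω → X) ω‖} with hD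
    have hDmeas : MeasurableSet D := by
      have hmeas : Measurable fun ω => ‖(u (φ n) : Ω → X) ω - (u (φ m) : Ω → X) ω‖ :=
        (hsmn.sub hsmm).norm.measurable
      exact measurableSet_lt measurable_const hmeas
    have hμD : μ D ≤ ENNReal.ofReal εD := hN n hn m hm
    -- piece 1 : the small-difference part
    have hpiece1 : eLpNorm (Dᶜ.indicator
        (fun ω => (u (φ n) : Ω → X) ω - (u (φ m) : Ω → X) ω)) p μ
          ≤ ENNReal.ofReal (ε/12) := by
      have hbound : ∀ᵐ ω ∂μ, ‖Dᶜ.indicator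
          (fun ω => (u (φ n) : Ω → X) ω - (u (φ m) : Ω → X) ω) ω‖ ≤ δ := by
        refine ae_of_all _ fun ω => ?_
        by_cases hω : ω ∈ Dᶜ
        · rw [Set.indicator_of_mem hω]
          have hωD : ¬ δ < ‖(u (φ n) : Ω → X) ω - (u (φ m) : Ω → X) ω‖ := hω
          exact le_of_not_gt hωD
        · rw [Set.indicator_of_notMem hω]
          simpa using le_of_lt hδ
      calc eLpNorm (Dᶜ.indicator
            (fun ω => (u (φ n) : Ω → X) ω - (u (φ m) : Ω → X) ω)) p μ
          ≤ μ Set.univ ^ p.toReal⁻¹ * ENNReal.ofReal δ := eLpNorm_le_of_ae_bound hbound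
        _ ≤ ENNReal.ofReal (ε/12) := by
            rw [← ENNReal.ofReal_toReal (measure_ne_top μ Set.univ),
              ENNReal.ofReal_rpow_of_nonneg ENNReal.toReal_nonneg (by positivity),
              ← ENNReal.ofReal_mul hMa0]
            apply ENNReal.ofReal_le_ofReal
            have hsum : (Ma + 1) * δ = ε/12 := by
              rw [hδdef, mul_comm, div_mul_cancel₀ _ (by positivity : (0:ℝ) < Ma + 1).ne']
            nlinarith [hδ, hMa0]
    -- piece 2 : indicators of the bad set
    have hpiece2 : ∀ g : Lp X p μ, g ∈ V → eLpNorm (D.indicator (g : Ω → X)) p μ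
        ≤ ENNReal.ofReal (ε/12) + ENNReal.ofReal (ε/12) := by
      intro g hg
      have hsg := Lp.stronglyMeasurable g
      have hTmeas : MeasurableSet {ω | r < ‖(g : Ω → X) ω‖} :=
        measurableSet_lt measurable_const hsg.norm.measurable
      have hsplit : D.indicator (g : Ω → X) =
          D.indicator (Set.indicator {ω | r < ‖(g : Ω → X) ω‖} (g : Ω → X)) +
          (D ∩ {ω | r < ‖(g : Ω → X) ω‖}ᶜ).indicator (g : Ω → X) := by
        funext ω
        by_cases hω : ω ∈ D
        · by_cases hω2 : ω ∈ {ω | r < ‖(g : Ω → X) ω‖}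
          · have hnot : ω ∉ D ∩ {ω | r < ‖(g : Ω → X) ω‖}ᶜ := fun h => h.2 hω2
            simp [Set.indicator_of_mem hω, Set.indicator_of_mem hω2,
              Set.indicator_of_notMem hnot]
          · have hmem2 : ω ∈ D ∩ {ω | r < ‖(g : Ω → X) ω‖}ᶜ := ⟨hω, hω2⟩
            simp [Set.indicator_of_mem hω, Set.indicator_of_notMem hω2,
              Set.indicator_of_mem hmem2]
        · have hnot : ω ∉ D ∩ {ω | r < ‖(g : Ω → X) ω‖}ᶜ := fun h => hω h.1
          simp [Set.indicator_of_notMem hω, Set.indicator_of_notMem hnot]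
      have h1 : eLpNorm (D.indicator
          (Set.indicator {ω | r < ‖(g : Ω → X) ω‖} (g : Ω → X))) p μ
            ≤ ENNReal.ofReal (ε/12) :=
        (eLpNorm_indicator_le _).trans (hr g hg)
      have h2 : eLpNorm ((D ∩ {ω | r < ‖(g : Ω → X) ω‖}ᶜ).indicator (g : Ω → X)) p μ
          ≤ ENNReal.ofReal (ε/12) := by
        rw [eLpNorm_indicator_eq_eLpNorm_restrict (hDmeas.inter hTmeas.compl)]
        have hbound : ∀ᵐ ω ∂(μ.restrict (D ∩ {ω | r < ‖(g : Ω → X) ω‖}ᶜ)),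
            ‖(g : Ω → X) ω‖ ≤ r := by
          refine (ae_restrict_iff' (hDmeas.inter hTmeas.compl)).mpr (ae_of_all _ ?_)
          intro ω hω
          exact le_of_not_gt hω.2
        calc eLpNorm (g : Ω → X) p (μ.restrict (D ∩ {ω | r < ‖(g : Ω → X) ω‖}ᶜ))
            ≤ (μ.restrict (D ∩ {ω | r < ‖(g : Ω → X) ω‖}ᶜ)) Set.univ ^ p.toReal⁻¹ *
                ENNReal.ofReal r := eLpNorm_le_of_ae_bound hbound
          _ ≤ (ENNReal.ofReal εD) ^ p.toReal⁻¹ * ENNReal.ofReal r := by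
              gcongr
              rw [Measure.restrict_apply_univ]
              exact le_trans (measure_mono Set.inter_subset_left) hμD
          _ = ENNReal.ofReal (ε/12) := by
              rw [ENNReal.ofReal_rpow_of_nonneg (le_of_lt hεD0) (by positivity), hεD,
                ← Real.rpow_mul (by positivity), mul_inv_cancel₀ (ne_of_gt hpt),
                Real.rpow_one, ← ENNReal.ofReal_mul (by positivity),
                div_mul_cancel₀ _ (ne_of_gt hrpos)]
      rw [hsplit]
      calc eLpNorm (D.indicator (Set.indicator {ω | r < ‖(g : Ω → X) ω‖} (g : Ω → X)) +
            (D ∩ {ω | r < ‖(g : Ω → X) ω‖}ᶜ).indicator (g : Ω → X)) p μ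
          ≤ eLpNorm (D.indicator
              (Set.indicator {ω | r < ‖(g : Ω → X) ω‖} (g : Ω → X))) p μ +
            eLpNorm ((D ∩ {ω | r < ‖(g : Ω → X) ω‖}ᶜ).indicator (g : Ω → X)) p μ :=
            eLpNorm_add_le
              (((hsg.indicator hTmeas).indicator hDmeas).aestronglyMeasurable)
              ((hsg.indicator (hDmeas.inter hTmeas.compl)).aestronglyMeasurable) hp1
        _ ≤ ENNReal.ofReal (ε/12) + ENNReal.ofReal (ε/12) := add_le_add h1 h2
    -- assemble
    have hsplit0 : (fun ω => (u (φ n) : Ω → X) ω - (u (φ m) : Ω → X) ω) =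
        (fun ω => D.indicator (u (φ n) : Ω → X) ω - D.indicator (u (φ m) : Ω → X) ω) +
        Dᶜ.indicator (fun ω => (u (φ n) : Ω → X) ω - (u (φ m) : Ω → X) ω) := by
      funext ω
      by_cases hω : ω ∈ D
      · have hnot : ω ∉ Dᶜ := fun h => h hω
        simp [Set.indicator_of_mem hω, Set.indicator_of_notMem hnot]
      · simp [Set.indicator_of_notMem hω, Set.indicator_of_mem (Set.mem_compl hω)]
    have hmain : eLpNorm (fun ω => (u (φ n) : Ω → X) ω - (u (φ m) : Ω → X) ω) p μ
        ≤ ENNReal.ofReal (ε/12) + ENNReal.ofReal (ε/12) +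
          (ENNReal.ofReal (ε/12) + ENNReal.ofReal (ε/12)) + ENNReal.ofReal (ε/12) := by
      rw [hsplit0]
      calc eLpNorm ((fun ω => D.indicator (u (φ n) : Ω → X) ω -
              D.indicator (u (φ m) : Ω → X) ω) +
            Dᶜ.indicator (fun ω => (u (φ n) : Ω → X) ω - (u (φ m) : Ω → X) ω)) p μ
          ≤ eLpNorm (fun ω => D.indicator (u (φ n) : Ω → X) ω -
                D.indicator (u (φ m) : Ω → X) ω) p μ +
              eLpNorm (Dᶜ.indicator
                (fun ω => (u (φ n) : Ω → X) ω - (u (φ m) : Ω → X) ω)) p μ := by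
            refine eLpNorm_add_le ?_ ?_ hp1
            · exact ((hsmn.indicator hDmeas).sub (hsmm.indicator hDmeas)).aestronglyMeasurable
            · exact ((hsmn.sub hsmm).indicator hDmeas.compl).aestronglyMeasurable
        _ ≤ (ENNReal.ofReal (ε/12) + ENNReal.ofReal (ε/12) +
              (ENNReal.ofReal (ε/12) + ENNReal.ofReal (ε/12))) + ENNReal.ofReal (ε/12) := by
            refine add_le_add ?_ hpiece1
            calc eLpNorm (fun ω => D.indicator (u (φ n) : Ω → X) ω -
                  D.indicator (u (φ m) : Ω → X) ω) p μ
                ≤ eLpNorm (D.indicator (u (φ n) : Ω → X)) p μ +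
                  eLpNorm (D.indicator (u (φ m) : Ω → X)) p μ :=
                eLpNorm_sub_le (hsmn.indicator hDmeas).aestronglyMeasurable
                  (hsmm.indicator hDmeas).aestronglyMeasurable hp1
              _ ≤ _ := add_le_add (hpiece2 _ (hu (φ n))) (hpiece2 _ (hu (φ m)))
        _ = _ := by ring
    have hdist : dist ((u ∘ φ) n) ((u ∘ φ) m) =
        (eLpNorm (fun ω => (u (φ n) : Ω → X) ω - (u (φ m) : Ω → X) ω) p μ).toReal := by
      rw [Function.comp_apply, Function.comp_apply, Lp.dist_def]
      rfl
    rw [hdist]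
    have hsum : ENNReal.ofReal (ε/12) + ENNReal.ofReal (ε/12) +
        (ENNReal.ofReal (ε/12) + ENNReal.ofReal (ε/12)) + ENNReal.ofReal (ε/12) =
        ENNReal.ofReal (5 * (ε/12)) := by
      rw [show (5:ℝ) * (ε/12) = ε/12 + ε/12 + (ε/12 + ε/12) + ε/12 by ring]
      rw [ENNReal.ofReal_add (p := ε/12 + ε/12 + (ε/12 + ε/12)) (q := ε/12)
          (by positivity) (by positivity),
        ENNReal.ofReal_add (p := ε/12 + ε/12) (q := ε/12 + ε/12)
          (by positivity) (by positivity),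
        ENNReal.ofReal_add (p := ε/12) (q := ε/12) (by positivity) (by positivity)]
    rw [hsum] at hmain
    have htr : (eLpNorm (fun ω => (u (φ n) : Ω → X) ω - (u (φ m) : Ω → X) ω) p μ).toReal
        ≤ 5 * (ε/12) := ENNReal.toReal_le_of_le_ofReal (by positivity) hmain
    linarith
  -- conclude sequential compactness of the closure
  have hseq : IsSeqCompact (closure V) := by
    intro x hx
    have happrox : ∀ n : ℕ, ∃ z ∈ V, dist (x n) z < 1 / (n + 1) := fun n =>
      Metric.mem_closure_iff.mp (hx n) _ (by positivity)
    choose y hyV hyd using happrox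
    obtain ⟨φ, hφ, hcauchy⟩ := key y hyV
    have hdiff : Tendsto (fun n => x (φ n) - y (φ n)) atTop (𝓝 0) := by
      rw [tendsto_zero_iff_norm_tendsto_zero]
      refine squeeze_zero (fun n => norm_nonneg _) (fun n => ?_)
        tendsto_one_div_add_atTop_nhds_zero_nat
      have h1 : ‖x (φ n) - y (φ n)‖ = dist (x (φ n)) (y (φ n)) := (dist_eq_norm _ _).symm
      have h2 : dist (x (φ n)) (y (φ n)) < 1 / (φ n + 1) := hyd (φ n)
      have h3 : (1 : ℝ) / (φ n + 1) ≤ 1 / (n + 1) := by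
        apply one_div_le_one_div_of_le (by positivity)
        have hnn : (n : ℝ) ≤ (φ n : ℝ) := by exact_mod_cast hφ.le_apply
        linarith
      linarith
    have hx_cauchy : CauchySeq (x ∘ φ) := by
      have heq : (x ∘ φ) = fun n => (x (φ n) - y (φ n)) + (y ∘ φ) n := by
        funext n; simp
      rw [heq]
      exact hdiff.cauchySeq.add hcauchy
    obtain ⟨l, hl⟩ := cauchySeq_tendsto_of_complete hx_cauchy
    exact ⟨l, isClosed_closure.mem_of_tendsto hl (Eventually.of_forall fun n => hx (φ n)),
      φ, hφ, hl⟩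
  exact hseq.isCompact
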